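/- Let H be the Hamiltonian on two copies of the n-qubit Hilbert space given by H = Σ_{α<β<γ} X_α^{s_α} ⊗ (Y_{βγ}^{s_β,s_γ} + Y_{βγ}^{s_β,s_γ†})/2, with the operators X and Y defined from pairs of qubit indices as in the graph-state construction. Then for any graph state |G(A)⟩, ⟨G(A)|^{⊗2} H |G(A)⟩^{⊗2} = Σ_{α<β<γ} (x_α ⊕ s_α)(x_β ⊕ s_β)(x_γ ⊕ s_γ), where x_α = (1+(−1)^{A_α})/2 ∈ {0,1} are the edge indicator variables of A and ⊕ denotes addition modulo 2. -/
import Mathlib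


open Matrix Kronecker

noncomputable def graphState {n : ℕ} (A : Matrix (Fin n) (Fin n) (ZMod 2)) :
    (Fin n → ZMod 2) → ℂ :=
  fun x => (Real.sqrt (2 ^ n) : ℂ)⁻¹ *
    (-1 : ℂ) ^ ((∑ i : Fin n, ∑ j ∈ Finset.univ.filter (fun j => i < j),
      A i j * x i * x j).val)

def pairIndicator {n : ℕ} (i j : Fin n) : Fin n → ZMod 2 :=
  fun k => if k = i ∨ k = j then 1 else 0

noncomputable def xVec {n : ℕ} (s : ZMod 2) (i j : Fin n) : (Fin n → ZMod 2) → ℂ :=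
  fun x => (if x = 0 then 1 else 0) +
    (-1 : ℂ) ^ s.val * (if x = pairIndicator i j then 1 else 0)

noncomputable def Xop {n : ℕ} (s : ZMod 2) (i j : Fin n) :
    Matrix (Fin n → ZMod 2) (Fin n → ZMod 2) ℂ :=
  ((2 ^ n : ℂ) / 4) • Matrix.vecMulVec (xVec s i j) (xVec s i j)

/-- `Y^{s,s'}(i,j,k,l) = (d/4)(|0⟩+(−1)^s|e_i+e_j⟩)(⟨0|+(−1)^{s'}⟨e_k+e_l|)`. -/
noncomputable def Yop {n : ℕ} (s s' : ZMod 2) (i j k l : Fin n) :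
    Matrix (Fin n → ZMod 2) (Fin n → ZMod 2) ℂ :=
  ((2 ^ n : ℂ) / 4) • Matrix.vecMulVec (xVec s i j) (xVec s' k l)

/-- Two identical copies of a graph state. -/
noncomputable def gg {n : ℕ} (A : Matrix (Fin n) (Fin n) (ZMod 2)) :
    ((Fin n → ZMod 2) × (Fin n → ZMod 2)) → ℂ :=
  fun p => graphState A p.1 * graphState A p.2

/-- The edge-indicator bit `x_α = (1+(−1)^{A_α})/2 ∈ {0,1}` of the pair `α = (i,j)`,
as an element of `ZMod 2`. -/
def xbit {n : ℕ} (A : Matrix (Fin n) (Fin n) (ZMod 2)) (p : Fin n × Fin n) : ZMod 2 :=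
  if A p.1 p.2 = 0 then 1 else 0


-- Auxiliary lemmas --------------------------------------------------------

lemma quad_pair {n : ℕ} (A : Matrix (Fin n) (Fin n) (ZMod 2)) (i j : Fin n) (hij : i < j) :
    (∑ k : Fin n, ∑ l ∈ Finset.univ.filter (fun l => k < l),
      A k l * pairIndicator i j k * pairIndicator i j l) = A i j := by
  rw [Finset.sum_eq_single i]
  · rw [Finset.sum_eq_single j]
    · simp [pairIndicator, hij.ne']
    · intro l hl hlj
      simp only [Finset.mem_filter, Finset.mem_univ, true_and] at hl
      have : pairIndicator i j l = 0 := by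
        simp [pairIndicator, hl.ne', hlj]
      simp [this]
    · intro h
      exact absurd (Finset.mem_filter.mpr ⟨Finset.mem_univ _, hij⟩) h
  · intro k _ hki
    by_cases hkj : k = j
    · apply Finset.sum_eq_zero
      intro l hl
      simp only [Finset.mem_filter, Finset.mem_univ, true_and] at hl
      have : pairIndicator i j l = 0 := by
        have h1 : l ≠ j := by rintro rfl; exact absurd (hkj ▸ hl) (lt_irrefl _)
        have h2 : l ≠ i := (hij.trans (hkj ▸ hl)).ne'
        simp [pairIndicator, h1, h2]
      simp [this]
    · have : pairIndicator i j k = 0 := by simp [pairIndicator, hki, hkj]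
      simp [this]
  · simp

lemma graphState_zero {n : ℕ} (A : Matrix (Fin n) (Fin n) (ZMod 2)) :
    graphState A 0 = (Real.sqrt (2 ^ n) : ℂ)⁻¹ := by
  simp [graphState]

lemma graphState_pair {n : ℕ} (A : Matrix (Fin n) (Fin n) (ZMod 2)) (i j : Fin n)
    (hij : i < j) :
    graphState A (pairIndicator i j)
      = (Real.sqrt (2 ^ n) : ℂ)⁻¹ * (-1) ^ ((A i j).val) := by
  rw [graphState, quad_pair A i j hij]

lemma star_graphState {n : ℕ} (A : Matrix (Fin n) (Fin n) (ZMod 2)) :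
    star (graphState A) = graphState A := by
  funext x
  simp only [Pi.star_apply, graphState, star_mul', star_inv₀, star_pow]
  norm_num

lemma pairIndicator_ne_zero {n : ℕ} (i j : Fin n) : pairIndicator i j ≠ 0 := by
  intro h
  have := congrFun h i
  simp [pairIndicator] at this

lemma neg_one_pow_val_add (a b : ZMod 2) :
    (-1 : ℂ) ^ ((a + b).val) = (-1) ^ a.val * (-1) ^ b.val := by
  rw [← pow_add, neg_one_pow_eq_pow_mod_two, neg_one_pow_eq_pow_mod_two (n := a.val + b.val)]
  congr 1
  revert a b; decide

lemma dot_xVec {n : ℕ} (A : Matrix (Fin n) (Fin n) (ZMod 2)) (i j : Fin n) (hij : i < j)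
    (s : ZMod 2) :
    graphState A ⬝ᵥ xVec s i j
      = (Real.sqrt (2 ^ n) : ℂ)⁻¹ * (1 + (-1) ^ ((s + A i j).val)) := by
  have hterm : ∀ x, graphState A x * xVec s i j x
      = (if x = 0 then graphState A 0 else 0)
        + (if x = pairIndicator i j then (-1 : ℂ) ^ s.val * graphState A (pairIndicator i j)
            else 0) := by
    intro x
    by_cases h0 : x = 0
    · subst h0
      simp [xVec, (pairIndicator_ne_zero i j).symm]
    · by_cases hp : x = pairIndicator i j
      · subst hp
        simp [xVec, pairIndicator_ne_zero i j]
        ring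
      · simp [xVec, h0, hp]
  simp only [dotProduct, hterm, Finset.sum_add_distrib, Finset.sum_ite_eq',
    Finset.mem_univ, if_true]
  rw [graphState_zero, graphState_pair A i j hij, neg_one_pow_val_add]
  ring

lemma expect_vmv {ι : Type*} [Fintype ι] (g u w : ι → ℂ) :
    star g ⬝ᵥ ((vecMulVec u w) *ᵥ g) = (star g ⬝ᵥ u) * (w ⬝ᵥ g) := by
  simp only [dotProduct, mulVec, vecMulVec_apply, Pi.star_apply]
  rw [Finset.sum_mul_sum]
  exact Finset.sum_congr rfl fun p _ => by
    rw [Finset.mul_sum]; exact Finset.sum_congr rfl fun q _ => by ring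

lemma csq {n : ℕ} : ((Real.sqrt (2 ^ n) : ℂ))⁻¹ * ((Real.sqrt (2 ^ n) : ℂ))⁻¹
    = ((2 : ℂ) ^ n)⁻¹ := by
  rw [← mul_inv, ← Complex.ofReal_mul, Real.mul_self_sqrt (by positivity)]
  norm_num

lemma bit_eq (a : ZMod 2) : (1 + (-1 : ℂ) ^ a.val) = 2 * ((a + 1).val : ℂ) := by
  have : a = 0 ∨ a = 1 := by revert a; decide
  rcases this with rfl | rfl
  · rw [show ((0:ZMod 2)+1).val = 1 by decide, show (0:ZMod 2).val = 0 by decide]; norm_num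
  · rw [show ((1:ZMod 2)+1).val = 0 by decide, show (1:ZMod 2).val = 1 by decide]; norm_num

lemma bit_sq (b : ZMod 2) : ((b.val : ℂ)) * ((b.val : ℂ)) = (b.val : ℂ) := by
  have : b = 0 ∨ b = 1 := by revert b; decide
  rcases this with rfl | rfl <;>
    simp [show (0:ZMod 2).val = 0 by decide, show (1:ZMod 2).val = 1 by decide]

lemma xbit_eq' (a : ZMod 2) : (if a = 0 then (1 : ZMod 2) else 0) = a + 1 := by
  revert a; decide

lemma expect_Y {n : ℕ} (A : Matrix (Fin n) (Fin n) (ZMod 2)) (s s' : ZMod 2)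
    (i j k l : Fin n) (hij : i < j) (hkl : k < l) :
    star (graphState A) ⬝ᵥ (Yop s s' i j k l *ᵥ graphState A)
      = ((s + A i j + 1).val : ℂ) * ((s' + A k l + 1).val : ℂ) := by
  rw [Yop, Matrix.smul_mulVec, dotProduct_smul, expect_vmv, star_graphState,
    dotProduct_comm (xVec s' k l), dot_xVec A i j hij s, dot_xVec A k l hkl s',
    smul_eq_mul]
  rw [bit_eq (s + A i j), bit_eq (s' + A k l)]
  have h2 : ((2:ℂ)^n) ≠ 0 := pow_ne_zero _ two_ne_zero
  have hc : ((Real.sqrt (2 ^ n) : ℂ))⁻¹ * ((Real.sqrt (2 ^ n) : ℂ))⁻¹ * (2:ℂ)^n = 1 := by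
    rw [csq]; exact inv_mul_cancel₀ h2
  linear_combination (((s + A i j + 1).val : ℂ) * ((s' + A k l + 1).val : ℂ)) * hc

lemma expect_X {n : ℕ} (A : Matrix (Fin n) (Fin n) (ZMod 2)) (s : ZMod 2)
    (i j : Fin n) (hij : i < j) :
    star (graphState A) ⬝ᵥ (Xop s i j *ᵥ graphState A) = ((s + A i j + 1).val : ℂ) := by
  rw [show Xop s i j = Yop s s i j i j from rfl, expect_Y A s s i j i j hij hij, bit_sq]

lemma star_xVec {n : ℕ} (s : ZMod 2) (i j : Fin n) : star (xVec s i j) = xVec s i j := by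
  funext x
  simp only [Pi.star_apply, xVec, star_add, star_mul', star_pow]
  by_cases h0 : x = 0 <;> by_cases hp : x = pairIndicator i j <;>
    simp [h0, hp]

lemma Yop_conjTranspose {n : ℕ} (s s' : ZMod 2) (i j k l : Fin n) :
    (Yop s s' i j k l)ᴴ = Yop s' s k l i j := by
  rw [Yop, Yop, Matrix.conjTranspose_smul]
  congr 1
  · simp
  · ext p q
    simp only [conjTranspose_apply, vecMulVec_apply, star_mul']
    rw [← Pi.star_apply (xVec s i j), ← Pi.star_apply (xVec s' k l), star_xVec, star_xVec]
    exact mul_comm _ _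

lemma kron_mulVec' {ι κ : Type*} [Fintype ι] [Fintype κ] (M : Matrix ι ι ℂ) (N : Matrix κ κ ℂ)
    (g : ι → ℂ) (h : κ → ℂ) :
    ((M ⊗ₖ N) *ᵥ fun p => g p.1 * h p.2) = fun p => (M *ᵥ g) p.1 * (N *ᵥ h) p.2 := by
  funext p
  simp only [mulVec, dotProduct, kroneckerMap_apply, Fintype.sum_prod_type]
  rw [Finset.sum_mul_sum]
  exact Finset.sum_congr rfl fun q1 _ => Finset.sum_congr rfl fun q2 _ => by ring

lemma dot_prod_fun {ι κ : Type*} [Fintype ι] [Fintype κ] (g u : ι → ℂ) (h v : κ → ℂ) :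
    (star (fun p : ι × κ => g p.1 * h p.2) ⬝ᵥ fun p => u p.1 * v p.2)
      = (star g ⬝ᵥ u) * (star h ⬝ᵥ v) := by
  simp only [dotProduct, Pi.star_apply, star_mul', Fintype.sum_prod_type]
  rw [Finset.sum_mul_sum]
  exact Finset.sum_congr rfl fun p _ => Finset.sum_congr rfl fun q _ => by ring

lemma expect_kron {ι κ : Type*} [Fintype ι] [Fintype κ] (M : Matrix ι ι ℂ) (N : Matrix κ κ ℂ)
    (g : ι → ℂ) (h : κ → ℂ) :
    star (fun p : ι × κ => g p.1 * h p.2) ⬝ᵥ ((M ⊗ₖ N) *ᵥ fun p => g p.1 * h p.2)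
      = (star g ⬝ᵥ (M *ᵥ g)) * (star h ⬝ᵥ (N *ᵥ h)) := by
  rw [kron_mulVec']
  exact dot_prod_fun g (M *ᵥ g) h (N *ᵥ h)

lemma my_sum_mulVec {ι κ : Type*} [Fintype κ] (t : Finset ι) (f : ι → Matrix κ κ ℂ)
    (v : κ → ℂ) : (∑ i ∈ t, f i) *ᵥ v = ∑ i ∈ t, f i *ᵥ v := by
  funext p
  simp only [mulVec, dotProduct, Finset.sum_apply, Matrix.sum_apply, Finset.sum_mul]
  rw [Finset.sum_comm]

lemma my_dot_sum {ι κ : Type*} [Fintype κ] (t : Finset ι) (u : κ → ℂ) (v : ι → κ → ℂ) :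
    u ⬝ᵥ (∑ i ∈ t, v i) = ∑ i ∈ t, u ⬝ᵥ v i := by
  simp only [dotProduct, Finset.sum_apply, Finset.mul_sum]
  rw [Finset.sum_comm]

/-- `⟨G(A)|^{⊗2} H |G(A)⟩^{⊗2} = Σ_{α<β<γ} (x_α⊕s_α)(x_β⊕s_β)(x_γ⊕s_γ)` for the Hamiltonian
`H = Σ_{α<β<γ} X_α^{s_α} ⊗ (Y_{βγ}^{s_β,s_γ} + Y_{βγ}^{s_β,s_γ†})/2`. -/
theorem stmt10 {n m : ℕ} (A : Matrix (Fin n) (Fin n) (ZMod 2)) (hA : A.IsSymm)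
    (hdiag : ∀ i, A i i = 0)
    (e : Fin m → Fin n × Fin n) (he : ∀ α, (e α).1 < (e α).2)
    (s : Fin m → ZMod 2) :
    star (gg A) ⬝ᵥ
      ((∑ α : Fin m, ∑ β ∈ Finset.univ.filter (fun β => α < β),
          ∑ γ ∈ Finset.univ.filter (fun γ => β < γ),
          (Xop (s α) (e α).1 (e α).2) ⊗ₖ
            ((2 : ℂ)⁻¹ • (Yop (s β) (s γ) (e β).1 (e β).2 (e γ).1 (e γ).2 +
              (Yop (s β) (s γ) (e β).1 (e β).2 (e γ).1 (e γ).2)ᴴ))) *ᵥ gg A)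
      = ∑ α : Fin m, ∑ β ∈ Finset.univ.filter (fun β => α < β),
          ∑ γ ∈ Finset.univ.filter (fun γ => β < γ),
          ((xbit A (e α) + s α).val : ℂ) * ((xbit A (e β) + s β).val : ℂ) *
            ((xbit A (e γ) + s γ).val : ℂ) := by
  have hval : ∀ (p : Fin n × Fin n) (t : ZMod 2), (xbit A p + t) = t + A p.1 p.2 + 1 := by
    intro p t
    show (if A p.1 p.2 = 0 then (1:ZMod 2) else 0) + t = t + A p.1 p.2 + 1
    rw [xbit_eq']; ring
  simp only [my_sum_mulVec, my_dot_sum]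
  refine Finset.sum_congr rfl fun α _ => Finset.sum_congr rfl fun β hβ =>
    Finset.sum_congr rfl fun γ hγ => ?_
  rw [show gg A = fun p => graphState A p.1 * graphState A p.2 from rfl, expect_kron,
    expect_X A (s α) _ _ (he α),
    Matrix.smul_mulVec, Matrix.add_mulVec, dotProduct_smul, dotProduct_add,
    Yop_conjTranspose,
    expect_Y A (s β) (s γ) _ _ _ _ (he β) (he γ),
    expect_Y A (s γ) (s β) _ _ _ _ (he γ) (he β),
    hval (e α) (s α), hval (e β) (s β), hval (e γ) (s γ), smul_eq_mul]
  ring
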